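/- (Main theorem: constant iteration complexity of empirical EM, Theorem 4.) Let r = ‖θ*‖/14, δ ∈ (0,1), and set ε_ℓ = √(‖θ*‖² + σ²)·√((d + log(1/δ))/(mn)). Assume snr ≥ 4, mn ≥ 192²·(d + log(8/δ)), and n ≥ 64·log m + 104·(2d + log(4/δ)). Assume further there exist constants C_κ > 0 and C_ε ≥ 1 such that: (a) exp(−C_κ·n) ≤ 1/2 and for every θ with ε_ℓ ≤ ‖θ − θ*‖ ≤ r one has ‖M(θ) − θ*‖ ≤ exp(−C_κ·n)·‖θ − θ*‖; (b) with probability at least 1 − δ, Σ̂ is invertible and sup over θ with ε_ℓ ≤ ‖θ − θ*‖ ≤ r of ‖M_m(θ) − M(θ)‖ is at most C_ε·ε_ℓ; and (c) 4·C_ε·ε_ℓ ≤ r/2. Let θ₀ satisfy ‖θ₀ − θ*‖ ≤ r and define θ_{t+1} = M_m(θ_t). Then for T = ⌈1 + (1/(2·C_κ·n))·log(mn·‖θ*‖² / (28·C_ε·(‖θ*‖² + σ²)·(d + log(1/δ))))⌉, with probability at least 1 − δ, either there exists an iterate 0 ≤ t ≤ T with ‖θ_t − θ*‖ ≤ ε_ℓ,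 or ‖θ_T − θ*‖ ≤ 4·C_ε·ε_ℓ. -/

import Mathlib

open MeasureTheory ProbabilityTheory Real
open scoped ENNReal NNReal BigOperators RealInnerProductSpace

noncomputable section

abbrev Vec (d : ℕ) := EuclideanSpace ℝ (Fin d)

/-- Standard Gaussian measure on `EuclideanSpace ℝ (Fin d)`. -/
def stdGaussian (d : ℕ) : Measure (Vec d) :=
  (Measure.pi fun _ : Fin d => gaussianReal 0 1).map
    (MeasurableEquiv.toLp 2 (Fin d → ℝ))

instance (d : ℕ) : IsProbabilityMeasure (stdGaussian d) :=
  Measure.isProbabilityMeasure_map (MeasurableEquiv.measurable _).aemeasurable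

abbrev Samp (d n : ℕ) := (Fin n → Vec d) × (Fin n → ℝ)

def jointMeasure (d n : ℕ) (σ : ℝ) : Measure (Samp d n) :=
  (Measure.pi fun _ : Fin n => stdGaussian d).prod
    (Measure.pi fun _ : Fin n => gaussianReal 0 ⟨σ ^ 2, sq_nonneg σ⟩)

instance (d n : ℕ) (σ : ℝ) : IsProbabilityMeasure (jointMeasure d n σ) := by
  unfold jointMeasure
  have := instIsProbabilityMeasureGaussianReal 0 ⟨σ ^ 2, sq_nonneg σ⟩
  infer_instance

/-- The response variable `Yᵢ = ⟨Xᵢ, θ*⟩ + εᵢ`. -/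
def Yv {d n : ℕ} (θs : Vec d) (i : Fin n) (ω : Samp d n) : ℝ :=
  ⟪ω.1 i, θs⟫ + ω.2 i

/-- `Z = ∑ᵢ Xᵢ Yᵢ`. -/
def Zv {d n : ℕ} (θs : Vec d) (ω : Samp d n) : Vec d :=
  ∑ i, Yv θs i ω • ω.1 i

/-- The population EM map `M(θ) = 𝔼[X₁ Y₁ tanh(σ⁻² ∑ᵢ ⟨Xᵢ,θ⟩Yᵢ)]`. -/
def Mpop (d n : ℕ) (hn : 0 < n) (θs : Vec d) (σ : ℝ) (θ : Vec d) : Vec d :=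
  ∫ ω, (Yv θs ⟨0, hn⟩ ω *
      Real.tanh (1 / σ ^ 2 * ∑ i, ⟪ω.1 i, θ⟫ * Yv θs i ω)) • ω.1 ⟨0, hn⟩
    ∂ jointMeasure d n σ


instance (d n : ℕ) : IsProbabilityMeasure (Measure.pi fun _ : Fin n => stdGaussian d) := by
  infer_instance

instance (n : ℕ) (σ : ℝ) :
    IsProbabilityMeasure (Measure.pi fun _ : Fin n => gaussianReal 0 ⟨σ ^ 2, sq_nonneg σ⟩) := by
  have := instIsProbabilityMeasureGaussianReal 0 ⟨σ ^ 2, sq_nonneg σ⟩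
  infer_instance

/-- Sample space for `m` nodes each with `n` covariate/noise pairs. -/
abbrev MSamp (d m n : ℕ) := (Fin m → Fin n → Vec d) × (Fin m → Fin n → ℝ)

def multiMeasure (d m n : ℕ) (σ : ℝ) : Measure (MSamp d m n) :=
  (Measure.pi fun _ : Fin m => Measure.pi fun _ : Fin n => stdGaussian d).prod
    (Measure.pi fun _ : Fin m => Measure.pi fun _ : Fin n =>
      gaussianReal 0 ⟨σ ^ 2, sq_nonneg σ⟩)

instance (d m n : ℕ) (σ : ℝ) : IsProbabilityMeasure (multiMeasure d m n σ) := by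
  unfold multiMeasure
  constructor
  rw [← Set.univ_prod_univ, Measure.prod_prod]
  simp [measure_univ]

/-- The response `y_i^j = ⟨x_i^j, θ*⟩ + ε_i^j`. -/
def yv {d m n : ℕ} (θs : Vec d) (j : Fin m) (i : Fin n) (ω : MSamp d m n) : ℝ :=
  ⟪ω.1 j i, θs⟫ + ω.2 j i

/-- `Z^j = ∑ᵢ x_i^j y_i^j`. -/
def Zj {d m n : ℕ} (θs : Vec d) (j : Fin m) (ω : MSamp d m n) : Vec d :=
  ∑ i, yv θs j i ω • ω.1 j i

/-- The sample covariance `Σ̂ = (mn)⁻¹ ∑_j ∑_i x_i^j (x_i^j)ᵀ`. -/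
def covM {d m n : ℕ} (ω : MSamp d m n) : Matrix (Fin d) (Fin d) ℝ :=
  fun a b => ((m * n : ℕ) : ℝ)⁻¹ * ∑ j, ∑ i, ω.1 j i a * ω.1 j i b

/-- The empirical EM map `M_m(θ) = Σ̂⁻¹ (mn)⁻¹ ∑_j Z^j tanh(σ⁻² ⟨Z^j, θ⟩)`. -/
def Mm {d m n : ℕ} (θs : Vec d) (σ : ℝ) (ω : MSamp d m n) (θ : Vec d) : Vec d :=
  (EuclideanSpace.equiv (Fin d) ℝ).symm
    ((covM ω)⁻¹.mulVec fun a =>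
      ((m * n : ℕ) : ℝ)⁻¹ * ∑ j, Real.tanh (1 / σ ^ 2 * ⟪Zj θs j ω, θ⟫) * Zj θs j ω a)

/-- The iterates of the empirical EM algorithm started at `θ₀`. -/
def EMseq {d m n : ℕ} (θs : Vec d) (σ : ℝ) (θ₀ : Vec d) (ω : MSamp d m n) : ℕ → Vec d
  | 0 => θ₀
  | t + 1 => Mm θs σ ω (EMseq θs σ θ₀ ω t)

/-- The statistical accuracy `ε_ℓ = √(‖θ*‖² + σ²) √((d + log(1/δ))/(mn))`. -/
def epsl (d m n : ℕ) (θs : Vec d) (σ δ : ℝ) : ℝ :=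
  Real.sqrt (‖θs‖ ^ 2 + σ ^ 2) * Real.sqrt (((d : ℝ) + Real.log (1 / δ)) / ((m * n : ℕ) : ℝ))

set_option maxHeartbeats 1000000 in
/-- **Theorem 4 (main theorem): constant iteration complexity of empirical EM.** -/
theorem empirical_EM_main
    (d m n : ℕ) (hd : 1 ≤ d) (hm : 1 ≤ m) (hn : 0 < n)
    (θs : Vec d) (hθs : θs ≠ 0) (σ : ℝ) (hσ : 0 < σ)
    (hsnr : 4 ≤ ‖θs‖ / σ)
    (δ : ℝ) (hδ0 : 0 < δ) (hδ1 : δ < 1)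
    (hmn : (192 : ℝ) ^ 2 * ((d : ℝ) + Real.log (8 / δ)) ≤ ((m * n : ℕ) : ℝ))
    (hnlarge : 64 * Real.log m + 104 * (2 * (d : ℝ) + Real.log (4 / δ)) ≤ (n : ℝ))
    (Cκ Cε : ℝ) (hCκ : 0 < Cκ) (hCε : 1 ≤ Cε)
    -- (a) the population EM map is a contraction with factor `exp(−Cκ n) ≤ 1/2`
    (ha1 : Real.exp (-Cκ * n) ≤ 1 / 2)
    (ha2 : ∀ θ : Vec d, epsl d m n θs σ δ ≤ ‖θ - θs‖ → ‖θ - θs‖ ≤ ‖θs‖ / 14 →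
      ‖Mpop d n hn θs σ θ - θs‖ ≤ Real.exp (-Cκ * n) * ‖θ - θs‖)
    -- (b) uniform generalization bound on the shell, with probability at least `1 − δ`
    (hb : ENNReal.ofReal (1 - δ) ≤
      multiMeasure d m n σ
        {ω | IsUnit (covM ω).det ∧
          ∀ θ : Vec d, epsl d m n θs σ δ ≤ ‖θ - θs‖ → ‖θ - θs‖ ≤ ‖θs‖ / 14 →
            ‖Mm θs σ ω θ - Mpop d n hn θs σ θ‖ ≤ Cε * epsl d m n θs σ δ})
    -- (c)
    (hc : 4 * Cε * epsl d m n θs σ δ ≤ ‖θs‖ / 14 / 2)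
    (θ₀ : Vec d) (hθ₀ : ‖θ₀ - θs‖ ≤ ‖θs‖ / 14)
    (T : ℕ)
    (hT : T = ⌈1 + 1 / (2 * Cκ * n) *
      Real.log (((m * n : ℕ) : ℝ) * ‖θs‖ ^ 2 /
        (28 * Cε * (‖θs‖ ^ 2 + σ ^ 2) * ((d : ℝ) + Real.log (1 / δ))))⌉₊) :
    ENNReal.ofReal (1 - δ) ≤
      multiMeasure d m n σ
        {ω | (∃ t ≤ T, ‖EMseq θs σ θ₀ ω t - θs‖ ≤ epsl d m n θs σ δ) ∨
          ‖EMseq θs σ θ₀ ω T - θs‖ ≤ 4 * Cε * epsl d m n θs σ δ} := by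
  refine le_trans hb (measure_mono ?_)
  intro ω hω
  obtain ⟨hinv, hsup⟩ := hω
  set ε := epsl d m n θs σ δ with hεdef
  set r := ‖θs‖ / 14 with hrdef
  set κ := Real.exp (-Cκ * n) with hκdef
  have htp : (0:ℝ) < ‖θs‖ := norm_pos_iff.mpr hθs
  have hrpos : 0 < r := by rw [hrdef]; positivity
  have hNpos : (0:ℝ) < ((m * n : ℕ) : ℝ) := by
    have : 0 < m * n := Nat.mul_pos hm hn
    exact_mod_cast this
  have hLpos : (0:ℝ) < (d:ℝ) + Real.log (1 / δ) := by
    have h1 : (1:ℝ) ≤ (d:ℝ) := by exact_mod_cast hd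
    have h2 : (0:ℝ) < Real.log (1 / δ) := Real.log_pos (by rw [lt_div_iff₀ hδ0]; linarith)
    linarith
  have hapos : (0:ℝ) < ‖θs‖ ^ 2 + σ ^ 2 := by positivity
  have hεpos : 0 < ε := by
    rw [hεdef, epsl]
    apply mul_pos (Real.sqrt_pos.mpr hapos)
    exact Real.sqrt_pos.mpr (div_pos hLpos hNpos)
  have hεsq : ε ^ 2 = (‖θs‖ ^ 2 + σ ^ 2) * (((d:ℝ) + Real.log (1 / δ)) / ((m * n : ℕ) : ℝ)) := by
    rw [hεdef, epsl, mul_pow, Real.sq_sqrt hapos.le,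
      Real.sq_sqrt (le_of_lt (div_pos hLpos hNpos))]
  have hκpos : 0 < κ := Real.exp_pos _
  have hCε0 : (0:ℝ) < Cε := lt_of_lt_of_le one_pos hCε
  have hCεε : (0:ℝ) < Cε * ε := mul_pos hCε0 hεpos
  by_cases hex : ∃ t ≤ T, ‖EMseq θs σ θ₀ ω t - θs‖ ≤ ε
  · exact Or.inl hex
  push_neg at hex
  right
  -- induction: iterates stay in the shell and contract geometrically
  have key : ∀ t, t ≤ T → ‖EMseq θs σ θ₀ ω t - θs‖ ≤ r ∧
      ‖EMseq θs σ θ₀ ω t - θs‖ ≤ κ ^ t * r + 2 * (Cε * ε) := by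
    intro t
    induction t with
    | zero =>
      intro _
      refine ⟨hθ₀, ?_⟩
      simp only [pow_zero, one_mul]
      have : ‖EMseq θs σ θ₀ ω 0 - θs‖ = ‖θ₀ - θs‖ := rfl
      rw [this]; linarith
    | succ t ih =>
      intro hts
      obtain ⟨h1, h2⟩ := ih (Nat.le_of_succ_le hts)
      have hshell : ε < ‖EMseq θs σ θ₀ ω t - θs‖ := hex t (Nat.le_of_succ_le hts)
      have hM := ha2 (EMseq θs σ θ₀ ω t) hshell.le h1
      have hMm := hsup (EMseq θs σ θ₀ ω t) hshell.le h1
      have hsplit : EMseq θs σ θ₀ ω (t+1) - θs =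
          (Mm θs σ ω (EMseq θs σ θ₀ ω t) - Mpop d n hn θs σ (EMseq θs σ θ₀ ω t)) +
          (Mpop d n hn θs σ (EMseq θs σ θ₀ ω t) - θs) := by
        show Mm θs σ ω (EMseq θs σ θ₀ ω t) - θs = _
        abel
      have step : ‖EMseq θs σ θ₀ ω (t+1) - θs‖ ≤ Cε * ε + κ * ‖EMseq θs σ θ₀ ω t - θs‖ := by
        rw [hsplit]
        refine le_trans (norm_add_le _ _) ?_
        exact add_le_add hMm hM
      have hκhalf : κ ≤ 1/2 := ha1
      have hCεr : Cε * ε ≤ r / 8 := by linarith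
      constructor
      · have hκe : κ * ‖EMseq θs σ θ₀ ω t - θs‖ ≤ (1/2) * r := by
          have := mul_le_mul hκhalf h1 (norm_nonneg _) (by norm_num)
          linarith
        linarith
      · have hκe : κ * ‖EMseq θs σ θ₀ ω t - θs‖ ≤ κ * (κ ^ t * r + 2 * (Cε * ε)) := by
          exact mul_le_mul_of_nonneg_left h2 hκpos.le
        have hκc : κ * (Cε * ε) ≤ (1/2) * (Cε * ε) :=
          mul_le_mul_of_nonneg_right hκhalf hCεε.le
        rw [pow_succ]
        nlinarith [step, hκe, hκc]
  obtain ⟨-, hfin⟩ := key T le_rfl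
  -- now bound κ^T * r ≤ 2 Cε ε
  set s := r / (2 * (Cε * ε)) with hsdef
  have hspos : 0 < s := div_pos hrpos (by linarith)
  set A := ((m * n : ℕ) : ℝ) * ‖θs‖ ^ 2 /
      (28 * Cε * (‖θs‖ ^ 2 + σ ^ 2) * ((d : ℝ) + Real.log (1 / δ))) with hAdef
  have hAeq : A = s ^ 2 * (28 * Cε) := by
    rw [hAdef, hsdef, hrdef, div_pow, mul_pow, mul_pow, hεsq]
    field_simp
    ring
  have h28 : (0:ℝ) < 28 * Cε := by linarith
  have hlogA : Real.log A = 2 * Real.log s + Real.log (28 * Cε) := by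
    rw [hAeq, Real.log_mul (by positivity) (ne_of_gt h28)]
    rw [show s ^ 2 = s ^ (2:ℕ) by norm_num, Real.log_pow]
    push_cast; ring
  have hnpos : (0:ℝ) < (n:ℝ) := by exact_mod_cast hn
  have hcn : (0:ℝ) < Cκ * n := mul_pos hCκ hnpos
  have hTge : 1 + 1 / (2 * Cκ * n) * Real.log A ≤ (T : ℝ) := by
    rw [hT]; exact Nat.le_ceil _
  have hmul : Cκ * (n:ℝ) * (1 + 1 / (2 * Cκ * n) * Real.log A)
      = Cκ * n + Real.log A / 2 := by
    field_simp
  have hlog28 : 0 ≤ Real.log (28 * Cε) := Real.log_nonneg (by linarith)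
  have hlogsT : Real.log s ≤ Cκ * n * T := by
    have := mul_le_mul_of_nonneg_left hTge hcn.le
    rw [hmul] at this
    rw [hlogA] at this
    linarith
  have hκT : κ ^ T * r ≤ 2 * (Cε * ε) := by
    have hκTe : κ ^ T = Real.exp (-(Cκ * n * T)) := by
      rw [hκdef, ← Real.exp_nat_mul]
      congr 1
      ring
    have hsinv : Real.exp (-(Cκ * n * T)) ≤ s⁻¹ := by
      rw [← Real.exp_log hspos, ← Real.exp_neg]
      exact Real.exp_le_exp.mpr (neg_le_neg hlogsT)
    have hsr : s⁻¹ * r = 2 * (Cε * ε) := by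
      rw [hsdef]
      field_simp
    calc κ ^ T * r ≤ s⁻¹ * r := by
          rw [hκTe]; exact mul_le_mul_of_nonneg_right hsinv hrpos.le
      _ = 2 * (Cε * ε) := hsr
  calc ‖EMseq θs σ θ₀ ω T - θs‖ ≤ κ ^ T * r + 2 * (Cε * ε) := hfin
    _ ≤ 2 * (Cε * ε) + 2 * (Cε * ε) := by linarith
    _ = 4 * Cε * ε := by ring
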